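/- Let g : ℝ → ℂ be continuous and consider the linear ODE system on ℝ for T : ℝ → ℝ³ and N : ℝ → ℂ³: T'(x) = Re(g(x)·N(x)) and N'(x) = −conj(g(x))·T(x). If at x = 0 the data satisfy |T(0)| = 1, ⟨T(0), Re N(0)⟩ = 0, ⟨T(0), Im N(0)⟩ = 0, ⟨Re N(0), Im N(0)⟩ = 0 and |Re N(0)| = |Im N(0)| = 1, then these relations hold for all x ∈ ℝ: |T(x)| = 1, T(x) ⟂ Re N(x), T(x) ⟂ Im N(x), Re N(x) ⟂ Im N(x), and |Re N(x)| = |Im N(x)| = 1. -/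

import Mathlib

open Set
open scoped RealInnerProductSpace


private lemma v6_0 {α : Type*} (a b c d e f : α) : ![a,b,c,d,e,f] (0 : Fin 6) = a := rfl
private lemma v6_1 {α : Type*} (a b c d e f : α) : ![a,b,c,d,e,f] (1 : Fin 6) = b := rfl
private lemma v6_2 {α : Type*} (a b c d e f : α) : ![a,b,c,d,e,f] (2 : Fin 6) = c := rfl
private lemma v6_3 {α : Type*} (a b c d e f : α) : ![a,b,c,d,e,f] (3 : Fin 6) = d := rfl
private lemma v6_4 {α : Type*} (a b c d e f : α) : ![a,b,c,d,e,f] (4 : Fin 6) = e := rfl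
private lemma v6_5 {α : Type*} (a b c d e f : α) : ![a,b,c,d,e,f] (5 : Fin 6) = f := rfl

private lemma w6_0 {α : Type*} (a b c d e f : α) (h : 0 < 6) :
    ![a,b,c,d,e,f] ⟨0, h⟩ = a := rfl
private lemma w6_1 {α : Type*} (a b c d e f : α) (h : 1 < 6) :
    ![a,b,c,d,e,f] ⟨1, h⟩ = b := rfl
private lemma w6_2 {α : Type*} (a b c d e f : α) (h : 2 < 6) :
    ![a,b,c,d,e,f] ⟨2, h⟩ = c := rfl
private lemma w6_3 {α : Type*} (a b c d e f : α) (h : 3 < 6) :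
    ![a,b,c,d,e,f] ⟨3, h⟩ = d := rfl
private lemma w6_4 {α : Type*} (a b c d e f : α) (h : 4 < 6) :
    ![a,b,c,d,e,f] ⟨4, h⟩ = e := rfl
private lemma w6_5 {α : Type*} (a b c d e f : α) (h : 5 < 6) :
    ![a,b,c,d,e,f] ⟨5, h⟩ = f := rfl

private lemma frenet_aux (g : ℝ → ℂ) (hg : Continuous g)
    (T Nr Ni : ℝ → EuclideanSpace ℝ (Fin 3))
    (hT : ∀ x, HasDerivAt T ((g x).re • Nr x - (g x).im • Ni x) x)
    (hNr : ∀ x, HasDerivAt Nr (-((g x).re • T x)) x)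
    (hNi : ∀ x, HasDerivAt Ni ((g x).im • T x) x)
    (h1 : ‖T 0‖ = 1)
    (h2 : ⟪T 0, Nr 0⟫ = 0) (h3 : ⟪T 0, Ni 0⟫ = 0) (h4 : ⟪Nr 0, Ni 0⟫ = 0)
    (h5 : ‖Nr 0‖ = 1) (h6 : ‖Ni 0‖ = 1) :
    ∀ x : ℝ, 0 ≤ x → ‖T x‖ = 1 ∧ ⟪T x, Nr x⟫ = 0 ∧ ⟪T x, Ni x⟫ = 0 ∧ ⟪Nr x, Ni x⟫ = 0 ∧
      ‖Nr x‖ = 1 ∧ ‖Ni x‖ = 1 := by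
  intro x hx
  set f : ℝ → Fin 6 → ℝ := fun t =>
    ![⟪T t, T t⟫ - 1, ⟪T t, Nr t⟫, ⟪T t, Ni t⟫, ⟪Nr t, Ni t⟫,
      ⟪Nr t, Nr t⟫ - 1, ⟪Ni t, Ni t⟫ - 1] with hf_def
  set f' : ℝ → Fin 6 → ℝ := fun t =>
    ![2 * ((g t).re * f t 1) - 2 * ((g t).im * f t 2),
      (g t).re * f t 4 - (g t).im * f t 3 - (g t).re * f t 0,
      (g t).re * f t 3 - (g t).im * f t 5 + (g t).im * f t 0,
      -((g t).re * f t 2) + (g t).im * f t 1,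
      -(2 * ((g t).re * f t 1)),
      2 * ((g t).im * f t 2)] with hf'_def
  have hderiv : ∀ t, HasDerivAt f (f' t) t := by
    intro t
    rw [hasDerivAt_pi]
    intro i
    fin_cases i
    · have h := ((hT t).inner ℝ (hT t)).sub_const 1
      refine h.congr_deriv ?_
      simp [hf'_def, hf_def, v6_0, v6_1, v6_2, v6_3, v6_4, v6_5, w6_0, w6_1, w6_2, w6_3, w6_4, w6_5, inner_sub_left, inner_sub_right, real_inner_smul_left,
        real_inner_smul_right, real_inner_comm (Nr t) (T t), real_inner_comm (Ni t) (T t), -PiLp.inner_apply]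
      ring
    · have h := (hT t).inner ℝ (hNr t)
      refine h.congr_deriv ?_
      simp [hf'_def, hf_def, v6_0, v6_1, v6_2, v6_3, v6_4, v6_5, w6_0, w6_1, w6_2, w6_3, w6_4, w6_5, inner_sub_left, inner_neg_right, real_inner_smul_left,
        real_inner_smul_right, real_inner_comm (Nr t) (T t), real_inner_comm (Ni t) (Nr t), -PiLp.inner_apply]
      ring
    · have h := (hT t).inner ℝ (hNi t)
      refine h.congr_deriv ?_
      simp [hf'_def, hf_def, v6_0, v6_1, v6_2, v6_3, v6_4, v6_5, w6_0, w6_1, w6_2, w6_3, w6_4, w6_5, inner_sub_left, real_inner_smul_left,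
        real_inner_smul_right, real_inner_comm (Nr t) (Ni t), real_inner_comm (Ni t) (T t), -PiLp.inner_apply]
      ring
    · have h := (hNr t).inner ℝ (hNi t)
      refine h.congr_deriv ?_
      simp [hf'_def, hf_def, v6_0, v6_1, v6_2, v6_3, v6_4, v6_5, w6_0, w6_1, w6_2, w6_3, w6_4, w6_5, inner_neg_left, real_inner_smul_left,
        real_inner_smul_right, real_inner_comm (T t) (Ni t), real_inner_comm (T t) (Nr t), -PiLp.inner_apply]
      ring
    · have h := ((hNr t).inner ℝ (hNr t)).sub_const 1
      refine h.congr_deriv ?_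
      simp [hf'_def, hf_def, v6_0, v6_1, v6_2, v6_3, v6_4, v6_5, w6_0, w6_1, w6_2, w6_3, w6_4, w6_5, inner_neg_left, inner_neg_right, real_inner_smul_left,
        real_inner_smul_right, real_inner_comm (T t) (Nr t), -PiLp.inner_apply]
      ring
    · have h := ((hNi t).inner ℝ (hNi t)).sub_const 1
      refine h.congr_deriv ?_
      simp [hf'_def, hf_def, v6_0, v6_1, v6_2, v6_3, v6_4, v6_5, w6_0, w6_1, w6_2, w6_3, w6_4, w6_5, real_inner_smul_left, real_inner_smul_right,
        real_inner_comm (T t) (Ni t), -PiLp.inner_apply]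
      ring
  have hbound : ∀ t, ‖f' t‖ ≤ (4 * ‖g t‖) * ‖f t‖ := by
    intro t
    have hre : |(g t).re| ≤ ‖g t‖ := by
      exact Complex.abs_re_le_norm _
    have him : |(g t).im| ≤ ‖g t‖ := by
      exact Complex.abs_im_le_norm _
    have Hb : ∀ (a : ℝ) (i : Fin 6), |a| ≤ ‖g t‖ → |a * f t i| ≤ ‖g t‖ * ‖f t‖ := by
      intro a i ha
      rw [abs_mul]
      exact mul_le_mul ha (by simpa using norm_le_pi_norm (f t) i) (abs_nonneg _) (norm_nonneg _)
    have p0 := abs_le.1 (Hb _ 0 hre); have p1 := abs_le.1 (Hb _ 1 hre)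
    have p2 := abs_le.1 (Hb _ 2 hre); have p3 := abs_le.1 (Hb _ 3 hre)
    have p4 := abs_le.1 (Hb _ 4 hre); have p5 := abs_le.1 (Hb _ 5 hre)
    have q0 := abs_le.1 (Hb _ 0 him); have q1 := abs_le.1 (Hb _ 1 him)
    have q2 := abs_le.1 (Hb _ 2 him); have q3 := abs_le.1 (Hb _ 3 him)
    have q4 := abs_le.1 (Hb _ 4 him); have q5 := abs_le.1 (Hb _ 5 him)
    have hGF : 0 ≤ ‖g t‖ * ‖f t‖ := mul_nonneg (norm_nonneg _) (norm_nonneg _)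
    rw [pi_norm_le_iff_of_nonneg (by positivity)]
    intro i
    fin_cases i <;>
      simp only [hf'_def, v6_0, v6_1, v6_2, v6_3, v6_4, v6_5, w6_0, w6_1, w6_2, w6_3, w6_4, w6_5, Real.norm_eq_abs] <;>
      rw [abs_le] <;> constructor <;> linarith
  have hfx : f x = 0 := by
    obtain ⟨C, hC⟩ := (isCompact_Icc : IsCompact (Icc (0:ℝ) x)).exists_bound_of_continuousOn
      hg.continuousOn
    have key := norm_le_gronwallBound_of_norm_deriv_right_le
      (f := f) (f' := f') (δ := 0) (K := 4 * C) (ε := 0) (a := 0) (b := x)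
      (fun t _ => (hderiv t).continuousAt.continuousWithinAt)
      (fun t _ => (hderiv t).hasDerivWithinAt)
      (by
        have hf0 : f 0 = 0 := by
          funext i
          have e1 : ⟪T 0, T 0⟫ = 1 := by
            rw [real_inner_self_eq_norm_mul_norm, h1]; norm_num
          have e5 : ⟪Nr 0, Nr 0⟫ = 1 := by
            rw [real_inner_self_eq_norm_mul_norm, h5]; norm_num
          have e6 : ⟪Ni 0, Ni 0⟫ = 1 := by
            rw [real_inner_self_eq_norm_mul_norm, h6]; norm_num
          fin_cases i <;> simp [hf_def, v6_0, v6_1, v6_2, v6_3, v6_4, v6_5, w6_0, w6_1, w6_2, w6_3, w6_4, w6_5, e1, e5, e6, h1, h2, h3, h4, h5, h6, -PiLp.inner_apply]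
        rw [hf0]; simp)
      (by
        intro t ht
        have h1' := hbound t
        have h2' := hC t (Ico_subset_Icc_self ht)
        have := norm_nonneg (f t)
        nlinarith)
    have := key x ⟨hx, le_rfl⟩
    rw [sub_zero, gronwallBound_ε0_δ0] at this
    exact norm_le_zero_iff.1 this
  have c0 := congrFun hfx 0
  have c1 := congrFun hfx 1
  have c2 := congrFun hfx 2
  have c3 := congrFun hfx 3
  have c4 := congrFun hfx 4
  have c5 := congrFun hfx 5
  simp only [hf_def, v6_0, v6_1, v6_2, v6_3, v6_4, v6_5, w6_0, w6_1, w6_2, w6_3, w6_4, w6_5, Pi.zero_apply, sub_eq_zero]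
    at c0 c1 c2 c3 c4 c5
  refine ⟨?_, c1, c2, c3, ?_, ?_⟩
  · have := real_inner_self_eq_norm_mul_norm (T x)
    nlinarith [norm_nonneg (T x)]
  · have := real_inner_self_eq_norm_mul_norm (Nr x)
    nlinarith [norm_nonneg (Nr x)]
  · have := real_inner_self_eq_norm_mul_norm (Ni x)
    nlinarith [norm_nonneg (Ni x)]

/-- The generalized Frenet system `T' = Re(g·N)`, `N' = -conj(g)·T` (with `N = Nr + i Ni`)
preserves orthonormality of the frame `(T, Re N, Im N)`. -/
theorem stmt5 (g : ℝ → ℂ) (hg : Continuous g)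
    (T Nr Ni : ℝ → EuclideanSpace ℝ (Fin 3))
    (hT : ∀ x, HasDerivAt T ((g x).re • Nr x - (g x).im • Ni x) x)
    (hNr : ∀ x, HasDerivAt Nr (-((g x).re • T x)) x)
    (hNi : ∀ x, HasDerivAt Ni ((g x).im • T x) x)
    (h1 : ‖T 0‖ = 1)
    (h2 : ⟪T 0, Nr 0⟫ = 0) (h3 : ⟪T 0, Ni 0⟫ = 0) (h4 : ⟪Nr 0, Ni 0⟫ = 0)
    (h5 : ‖Nr 0‖ = 1) (h6 : ‖Ni 0‖ = 1) :
    ∀ x : ℝ, ‖T x‖ = 1 ∧ ⟪T x, Nr x⟫ = 0 ∧ ⟪T x, Ni x⟫ = 0 ∧ ⟪Nr x, Ni x⟫ = 0 ∧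
      ‖Nr x‖ = 1 ∧ ‖Ni x‖ = 1 := by
  intro x
  rcases le_total 0 x with hx | hx
  · exact frenet_aux g hg T Nr Ni hT hNr hNi h1 h2 h3 h4 h5 h6 x hx
  · have key := frenet_aux (fun t => -g (-t)) ((hg.comp continuous_neg).neg)
      (fun t => T (-t)) (fun t => Nr (-t)) (fun t => Ni (-t))
      (fun t => by
        have h := HasDerivAt.scomp t (hT (-t)) (hasDerivAt_neg t)
        refine h.congr_deriv ?_
        simp [neg_smul, smul_sub])
      (fun t => by
        have h := HasDerivAt.scomp t (hNr (-t)) (hasDerivAt_neg t)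
        refine h.congr_deriv ?_
        simp [neg_smul])
      (fun t => by
        have h := HasDerivAt.scomp t (hNi (-t)) (hasDerivAt_neg t)
        refine h.congr_deriv ?_
        simp [neg_smul])
      (by simpa using h1) (by simpa using h2) (by simpa using h3) (by simpa using h4)
      (by simpa using h5) (by simpa using h6) (-x) (by linarith)
    simpa using key
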